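/- Let T, Λ ∈ ℝ^{m×m} be diagonal with positive diagonals, C ∈ ℝ^{m×n}, H ∈ ℝ^{n×n} symmetric positive definite, A ∈ ℝ^{p×n} with full row rank. Then the 4×4 block Newton matrix K = [[H, −Aᵀ, −Cᵀ, 0], [−A, 0, 0, 0], [−C, 0, 0, I], [0, 0, T, Λ]] is nonsingular. -/

import Mathlib

open Matrix

theorem newton_system_matrix_nonsingular (m n p : ℕ)
    (t lam : Fin m → ℝ) (ht : ∀ i, 0 < t i) (hlam : ∀ i, 0 < lam i)
    (C : Matrix (Fin m) (Fin n) ℝ)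
    (H : Matrix (Fin n) (Fin n) ℝ) (hH : H.PosDef)
    (A : Matrix (Fin p) (Fin n) ℝ) (hA : A.rank = p) :
    (Matrix.fromBlocks
      (Matrix.fromBlocks H (-Aᵀ) (-A) 0)
      (Matrix.fromBlocks (-Cᵀ) 0 0 0)
      (Matrix.fromBlocks (-C) 0 0 0)
      (Matrix.fromBlocks 0 (1 : Matrix (Fin m) (Fin m) ℝ)
        (Matrix.diagonal t) (Matrix.diagonal lam))).det ≠ 0 := by
  intro hdet
  obtain ⟨v, hv, hKv⟩ := (Matrix.exists_mulVec_eq_zero_iff).2 hdet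
  set x : Fin n → ℝ := fun i => v (.inl (.inl i)) with hxdef
  set y : Fin p → ℝ := fun i => v (.inl (.inr i)) with hydef
  set s : Fin m → ℝ := fun i => v (.inr (.inl i)) with hsdef
  set w : Fin m → ℝ := fun i => v (.inr (.inr i)) with hwdef
  have hv' : v = Sum.elim (Sum.elim x y) (Sum.elim s w) := by
    funext j; rcases j with (j|j)|(j|j) <;> rfl
  rw [hv'] at hKv
  rw [Matrix.fromBlocks_mulVec, Matrix.fromBlocks_mulVec, Matrix.fromBlocks_mulVec,
    Matrix.fromBlocks_mulVec, Matrix.fromBlocks_mulVec] at hKv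
  -- extract equations
  have e1 : H *ᵥ x + (-Aᵀ) *ᵥ y + ((-Cᵀ) *ᵥ s) = 0 := by
    have := fun i => congrFun hKv (Sum.inl (Sum.inl i))
    funext i; simpa using this i
  have e2 : A *ᵥ x = 0 := by
    have := fun i => congrFun hKv (Sum.inl (Sum.inr i))
    funext i
    have h := this i
    simp at h
    simpa [Matrix.neg_mulVec, Pi.neg_apply, neg_eq_zero] using h
  have e3 : w = C *ᵥ x := by
    have := fun i => congrFun hKv (Sum.inr (Sum.inl i))
    funext i
    have h := this i
    simp [Matrix.neg_mulVec] at h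
    linarith
  have e4 : ∀ i, t i * s i + lam i * w i = 0 := by
    intro i
    have h := congrFun hKv (Sum.inr (Sum.inr i))
    simpa [Matrix.mulVec_diagonal] using h
  -- s i = - lam i / t i * w i
  have hs : ∀ i, s i = -(lam i / t i) * w i := by
    intro i
    have h := e4 i
    have h2 : s i = -(lam i * w i) / t i := (eq_div_iff (ht i).ne').2 (by linarith)
    rw [h2]; ring
  -- dot x with e1
  have key : x ⬝ᵥ (H *ᵥ x) + (∑ i, (lam i / t i) * w i ^ 2) = 0 := by
    have h1 : x ⬝ᵥ (H *ᵥ x + (-Aᵀ) *ᵥ y + ((-Cᵀ) *ᵥ s)) = 0 := by rw [e1, dotProduct_zero]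
    rw [dotProduct_add, dotProduct_add] at h1
    have h2 : x ⬝ᵥ ((-Aᵀ) *ᵥ y) = 0 := by
      rw [Matrix.neg_mulVec, dotProduct_neg, Matrix.dotProduct_mulVec, ← Matrix.mulVec_transpose,
        transpose_transpose, e2, zero_dotProduct, neg_zero]
    have h3 : x ⬝ᵥ ((-Cᵀ) *ᵥ s) = ∑ i, (lam i / t i) * w i ^ 2 := by
      rw [Matrix.neg_mulVec, dotProduct_neg, Matrix.dotProduct_mulVec, ← Matrix.mulVec_transpose,
        transpose_transpose, ← e3, dotProduct, ← Finset.sum_neg_distrib]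
      exact Finset.sum_congr rfl fun i _ => by rw [hs i]; ring
    rw [h2, h3] at h1
    linarith
  have hxz : x = 0 := by
    by_contra hx0
    have hpos := hH.dotProduct_mulVec_pos hx0
    have hnn : (0:ℝ) ≤ ∑ i, (lam i / t i) * w i ^ 2 :=
      Finset.sum_nonneg fun i _ => mul_nonneg (div_nonneg (hlam i).le (ht i).le) (sq_nonneg _)
    have hpos' : (0:ℝ) < x ⬝ᵥ (H *ᵥ x) := by simpa using hpos
    linarith [key]
  have hwz : w = 0 := by rw [e3, hxz, Matrix.mulVec_zero]
  have hsz : s = 0 := by funext i; simp [hs i, congrFun hwz i]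
  have hyz : y = 0 := by
    have hAy : Aᵀ *ᵥ y = 0 := by
      have := e1
      rw [hxz, hsz, Matrix.mulVec_zero, Matrix.mulVec_zero, zero_add, add_zero,
        Matrix.neg_mulVec, neg_eq_zero] at this
      exact this
    have hli : LinearIndependent ℝ (fun i => A i) := by
      rw [linearIndependent_iff_card_eq_finrank_span, Fintype.card_fin, Set.finrank]
      exact hA.symm.trans (Matrix.rank_eq_finrank_span_row (A := A))
    have hinj := Matrix.vecMul_injective_iff.2 hli
    have : y ᵥ* A = 0 ᵥ* A := by
      rw [Matrix.zero_vecMul, ← Matrix.mulVec_transpose, hAy]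
    exact hinj this
  apply hv
  rw [hv', hxz, hyz, hsz, hwz]
  funext j; rcases j with (j|j)|(j|j) <;> rfl
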